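/- Let G be a finite group with subgroups H ⊴ A ≤ G (H normal in A), and let r be an integer with 0 ≤ r ≤ |A:H| − 1. Then A is an (r,0)-regular set of the pair (G,H) if and only if gcd(2, |A:H| − 1) divides r. -/

import Mathlib

open scoped Pointwise

/-- A subset `C` of the vertices of a graph `Γ` is an `(r,s)`-regular set if every vertex
in `C` has exactly `r` neighbours in `C` and every vertex outside `C` has exactly `s`
neighbours in `C`. -/
def IsRegularVertexSet {V : Type*} (Γ : SimpleGraph V) (C : Set V) (r s : ℕ) : Prop :=
  (∀ v ∈ C, {w | w ∈ C ∧ Γ.Adj v w}.ncard = r) ∧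
  ∀ v ∉ C, {w | w ∈ C ∧ Γ.Adj v w}.ncard = s

/-- The coset graph `Cos(G,H,U)` on the left cosets of `H` in `G`:
`g₁H` and `g₂H` are adjacent iff `g₁⁻¹ g₂ ∈ U`. -/
def cosetGraph {G : Type*} [Group G] (H : Subgroup G) (U : Set G) : SimpleGraph (G ⧸ H) :=
  SimpleGraph.fromRel fun C D =>
    ∃ g₁ g₂ : G, QuotientGroup.mk g₁ = C ∧ QuotientGroup.mk g₂ = D ∧ g₁⁻¹ * g₂ ∈ U

/-- `U` is a valid connection set for a coset graph `Cos(G,H,U)`: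
inverse-closed, disjoint from `H`, and a union of double cosets of `H` (`HUH = U`). -/
def IsCosetGraphConnectionSet {G : Type*} [Group G] (H : Subgroup G) (U : Set G) : Prop :=
  U⁻¹ = U ∧ (H : Set G) ∩ U = ∅ ∧ (H : Set G) * U * (H : Set G) = U

/-- `A` is an `(r,s)`-regular set of the pair `(G,H)`: there is a coset graph
`Cos(G,H,U)` in which the set of left cosets of `H` in `A` is an `(r,s)`-regular set. -/
def IsRegularSetOfPair {G : Type*} [Group G] (H A : Subgroup G) (r s : ℕ) : Prop :=
  ∃ U : Set G, IsCosetGraphConnectionSet H U ∧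
    IsRegularVertexSet (cosetGraph H U)
      {C : G ⧸ H | ∃ a ∈ A, QuotientGroup.mk a = C} r s

/-- `A` is a perfect code of the pair `(G,H)` iff it is a `(0,1)`-regular set of `(G,H)`. -/
def IsPerfectCodeOfPair {G : Type*} [Group G] (H A : Subgroup G) : Prop :=
  IsRegularSetOfPair H A 0 1

/-- A subgroup `A` is an `(r,s)`-regular set of `G` iff it is an `(r,s)`-regular set of
the pair `(G,1)`, i.e. an `(r,s)`-regular set in some Cayley graph of `G`. -/
def IsRegularSetOfGroup {G : Type*} [Group G] (A : Subgroup G) (r s : ℕ) : Prop :=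
  IsRegularSetOfPair ⊥ A r s

/-- A subgroup `A` is a perfect code of `G` iff it is a `(0,1)`-regular set of `G`. -/
def IsPerfectCodeOfGroup {G : Type*} [Group G] (A : Subgroup G) : Prop :=
  IsRegularSetOfGroup A 0 1

/-- The conjugate subgroup `K^t = t⁻¹ K t`. -/
def conjSub {G : Type*} [Group G] (K : Subgroup G) (t : G) : Subgroup G :=
  K.map (MulAut.conj t⁻¹).toMonoidHom

section Comb
variable {Q : Type*} [Group Q] [DecidableEq Q]

lemma key3_even_card_of_symm (S : Finset Q) (hsym : ∀ x ∈ S, x⁻¹ ∈ S)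
    (hfix : ∀ x ∈ S, x⁻¹ ≠ x) : Even S.card := by
  induction S using Finset.strongInduction with
  | _ S ih =>
    rcases S.eq_empty_or_nonempty with rfl | ⟨x, hx⟩
    · simp
    · have hxi : x⁻¹ ∈ S := hsym x hx
      have hne : x⁻¹ ≠ x := hfix x hx
      set T := (S.erase x).erase x⁻¹ with hT
      have hTcard : T.card + 2 = S.card := by
        rw [hT, Finset.card_erase_of_mem (Finset.mem_erase.2 ⟨hne, hxi⟩),
          Finset.card_erase_of_mem hx]
        have h2 : 2 ≤ S.card := Finset.one_lt_card.2 ⟨x, hx, x⁻¹, hxi, hne.symm⟩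
        omega
      have hTs : T ⊂ S := by
        refine Finset.ssubset_iff_of_subset ?_ |>.2 ⟨x, hx, ?_⟩
        · exact (Finset.erase_subset _ _).trans (Finset.erase_subset _ _)
        · simp [hT]
      have hmem : ∀ y ∈ T, y ∈ S ∧ y ≠ x ∧ y ≠ x⁻¹ := by
        intro y hy
        simp only [hT, Finset.mem_erase] at hy
        exact ⟨hy.2.2, hy.2.1, hy.1⟩
      have hev := ih T hTs (fun y hy => by
          obtain ⟨hyS, hy1, hy2⟩ := hmem y hy
          simp only [hT, Finset.mem_erase]
          refine ⟨?_, ?_, hsym y hyS⟩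
          · intro h; exact hy1 (inv_injective h)
          · intro h; exact hy2 (by rw [← h, inv_inv]))
        (fun y hy => hfix y (hmem y hy).1)
      obtain ⟨k, hk⟩ := hev
      exact ⟨k + 1, by omega⟩

lemma key3_symm_shrink_two (S : Finset Q) (h1 : (1:Q) ∉ S) (hsym : ∀ x ∈ S, x⁻¹ ∈ S)
    (h2 : 2 ≤ S.card) :
    ∃ T ⊆ S, (1:Q) ∉ T ∧ (∀ x ∈ T, x⁻¹ ∈ T) ∧ T.card + 2 = S.card := by
  by_cases hex : ∃ x ∈ S, x⁻¹ ≠ x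
  · obtain ⟨x, hx, hne⟩ := hex
    have hxi : x⁻¹ ∈ S := hsym x hx
    refine ⟨(S.erase x).erase x⁻¹, (Finset.erase_subset _ _).trans (Finset.erase_subset _ _),
      fun h => h1 ((Finset.erase_subset _ _) ((Finset.erase_subset _ _) h)), ?_, ?_⟩
    · intro y hy
      simp only [Finset.mem_erase] at hy ⊢
      refine ⟨?_, ?_, hsym y hy.2.2⟩
      · intro h; exact hy.2.1 (inv_injective h)
      · intro h; exact hy.1 (by rw [← h, inv_inv])
    · rw [Finset.card_erase_of_mem (Finset.mem_erase.2 ⟨hne, hxi⟩),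
        Finset.card_erase_of_mem hx]
      omega
  · push_neg at hex
    obtain ⟨a, ha, b, hb, hab⟩ := Finset.one_lt_card.1 h2
    refine ⟨(S.erase a).erase b, (Finset.erase_subset _ _).trans (Finset.erase_subset _ _),
      fun h => h1 ((Finset.erase_subset _ _) ((Finset.erase_subset _ _) h)), ?_, ?_⟩
    · intro y hy
      simp only [Finset.mem_erase] at hy ⊢
      rw [hex y hy.2.2]
      exact hy
    · rw [Finset.card_erase_of_mem (Finset.mem_erase.2 ⟨hab.symm, hb⟩),
        Finset.card_erase_of_mem ha]
      omega

lemma key3_symm_shrink (n : ℕ) : ∀ S : Finset Q, S.card = n → (1:Q) ∉ S →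
    (∀ x ∈ S, x⁻¹ ∈ S) → ∀ r : ℕ, r ≤ n → r % 2 = n % 2 →
    ∃ T : Finset Q, (1:Q) ∉ T ∧ (∀ x ∈ T, x⁻¹ ∈ T) ∧ T.card = r := by
  induction n using Nat.strong_induction_on with
  | _ n ih =>
    intro S hcard h1 hsym r hle hpar
    rcases eq_or_lt_of_le hle with heq | hlt
    · exact ⟨S, h1, hsym, by omega⟩
    · have h2 : 2 ≤ S.card := by omega
      obtain ⟨T, hTS, hT1, hTsym, hTcard⟩ := key3_symm_shrink_two S h1 hsym h2
      exact ih T.card (by omega) T rfl hT1 hTsym r (by omega) (by omega)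

lemma key3_exists_symm_finset [Fintype Q] (r : ℕ)
    (hr : r ≤ Fintype.card Q - 1) (hd : Nat.gcd 2 (Fintype.card Q - 1) ∣ r) :
    ∃ S : Finset Q, (1:Q) ∉ S ∧ (∀ x ∈ S, x⁻¹ ∈ S) ∧ S.card = r := by
  set n := Fintype.card Q with hn
  have hnpos : 0 < n := Fintype.card_pos
  by_cases hpar : r % 2 = (n - 1) % 2
  · refine key3_symm_shrink (n - 1) (Finset.univ.erase 1) ?_ (Finset.notMem_erase _ _)
      ?_ r hr hpar
    · rw [Finset.card_erase_of_mem (Finset.mem_univ _), Finset.card_univ]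
    · intro x hx
      simp only [Finset.mem_erase, Finset.mem_univ, and_true] at hx ⊢
      simpa using hx
  · have hneven : Even n := by
      by_contra hodd
      have h2 : 2 ∣ n - 1 := by
        rcases Nat.even_or_odd n with h | h
        · exact absurd h hodd
        · obtain ⟨k, hk⟩ := h; omega
      have : Nat.gcd 2 (n - 1) = 2 := Nat.gcd_eq_left h2
      rw [this] at hd
      obtain ⟨k, hk⟩ := hd
      obtain ⟨m, hm⟩ := h2
      omega
    have hreven : Even r := by
      rcases Nat.even_or_odd r with h | h
      · exact h
      · exfalso
        obtain ⟨k, hk⟩ := hneven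
        obtain ⟨m, hm⟩ := h
        omega
    obtain ⟨t, ht⟩ := exists_prime_orderOf_dvd_card (G := Q) 2
      (by rw [← hn]; exact hneven.two_dvd)
    have ht1 : t ≠ 1 := by
      intro h; rw [h, orderOf_one] at ht; omega
    have htinv : t⁻¹ = t := by
      have h2 : t * t = 1 := by
        rw [← pow_two, ← ht]; exact pow_orderOf_eq_one t
      exact inv_eq_of_mul_eq_one_right h2
    have hcard2 : ((Finset.univ.erase (1:Q)).erase t).card = n - 2 := by
      rw [Finset.card_erase_of_mem (Finset.mem_erase.2 ⟨ht1, Finset.mem_univ _⟩),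
        Finset.card_erase_of_mem (Finset.mem_univ _), Finset.card_univ]
      omega
    have hn2 : 2 ≤ n := by
      obtain ⟨k, hk⟩ := hneven; omega
    refine key3_symm_shrink (n - 2) ((Finset.univ.erase 1).erase t) hcard2
      (fun h => by simp at h) ?_ r ?_ ?_
    · intro x hx
      simp only [Finset.mem_erase, Finset.mem_univ, and_true] at hx ⊢
      refine ⟨?_, ?_⟩
      · intro h; exact hx.1 (by rw [← htinv, ← h, inv_inv])
      · intro h; exact hx.2 (inv_injective (by rw [h, inv_one]))
    · -- r ≤ n - 2
      obtain ⟨k, hk⟩ := hneven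
      obtain ⟨m, hm⟩ := hreven
      omega
    · obtain ⟨k, hk⟩ := hneven
      obtain ⟨m, hm⟩ := hreven
      omega

end Comb

section Grp
variable {G : Type*} [Group G] {H A : Subgroup G} {U : Set G}

lemma key3_cosetGraph_adj (hU : IsCosetGraphConnectionSet H U) (a b : G) :
    (cosetGraph H U).Adj (QuotientGroup.mk a) (QuotientGroup.mk b) ↔ a⁻¹ * b ∈ U := by
  obtain ⟨hinv, hdisj, hmul⟩ := hU
  have hUHH : ∀ u ∈ U, ∀ h₁ ∈ H, ∀ h₂ ∈ H, h₁ * u * h₂ ∈ U := by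
    intro u hu h₁ hh₁ h₂ hh₂
    rw [← hmul]
    exact Set.mul_mem_mul (Set.mul_mem_mul hh₁ hu) hh₂
  have hne : ∀ x y : G, x⁻¹ * y ∈ U → (QuotientGroup.mk x : G ⧸ H) ≠ QuotientGroup.mk y := by
    intro x y hxy heq
    have : x⁻¹ * y ∈ (H : Set G) ∩ U := ⟨QuotientGroup.eq.1 heq, hxy⟩
    simp [hdisj] at this
  constructor
  · rintro ⟨hne', h | h⟩ <;> obtain ⟨g₁, g₂, h1, h2, hu⟩ := h
    · have m1 : a⁻¹ * g₁ ∈ H := QuotientGroup.eq.1 h1.symm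
      have m2 : g₂⁻¹ * b ∈ H := QuotientGroup.eq.1 h2
      have := hUHH _ hu _ m1 _ m2
      have heq : a⁻¹ * g₁ * (g₁⁻¹ * g₂) * (g₂⁻¹ * b) = a⁻¹ * b := by group
      rwa [heq] at this
    · have m1 : b⁻¹ * g₁ ∈ H := QuotientGroup.eq.1 h1.symm
      have m2 : g₂⁻¹ * a ∈ H := QuotientGroup.eq.1 h2
      have hba := hUHH _ hu _ m1 _ m2
      have heq : b⁻¹ * g₁ * (g₁⁻¹ * g₂) * (g₂⁻¹ * a) = b⁻¹ * a := by group
      rw [heq] at hba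
      rw [← hinv, Set.mem_inv]
      simpa using hba
  · intro h
    exact ⟨hne a b h, Or.inl ⟨a, b, rfl, rfl, h⟩⟩

/-- The natural injection `A ⧸ H.subgroupOf A → G ⧸ H`. -/
noncomputable def key3Psi (H A : Subgroup G) : A ⧸ H.subgroupOf A → G ⧸ H :=
  fun q => Quotient.liftOn' q (fun b => QuotientGroup.mk (b : G)) (by
    intro b c hbc
    rw [QuotientGroup.leftRel_apply] at hbc
    exact QuotientGroup.eq.2 hbc)

lemma key3Psi_mk (b : A) : key3Psi H A (QuotientGroup.mk b) = QuotientGroup.mk (b : G) := rfl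

lemma key3Psi_injective : Function.Injective (key3Psi H A) := by
  intro q₁ q₂ h
  induction q₁ using Quotient.inductionOn'
  induction q₂ using Quotient.inductionOn'
  rename_i b c
  have : (b : G)⁻¹ * c ∈ H := QuotientGroup.eq.1 h
  exact QuotientGroup.eq.2 this

variable [hN : (H.subgroupOf A).Normal]

lemma key3_count_nbrs (hU : IsCosetGraphConnectionSet H U) (a : G) (ha : a ∈ A) :
    {D : G ⧸ H | D ∈ {C : G ⧸ H | ∃ a ∈ A, QuotientGroup.mk a = C} ∧
        (cosetGraph H U).Adj (QuotientGroup.mk a) D}.ncard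
      = {q : A ⧸ H.subgroupOf A | ∃ b : A, QuotientGroup.mk b = q ∧ (b : G) ∈ U}.ncard := by
  set Sbar := {q : A ⧸ H.subgroupOf A | ∃ b : A, QuotientGroup.mk b = q ∧ (b : G) ∈ U}
  have hset : {D : G ⧸ H | D ∈ {C : G ⧸ H | ∃ a ∈ A, QuotientGroup.mk a = C} ∧
        (cosetGraph H U).Adj (QuotientGroup.mk a) D}
      = (fun q => key3Psi H A ((QuotientGroup.mk ⟨a, ha⟩ : A ⧸ H.subgroupOf A) * q)) '' Sbar := by
    ext D
    simp only [Set.mem_setOf_eq, Set.mem_image]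
    constructor
    · rintro ⟨⟨b, hbA, rfl⟩, hadj⟩
      rw [key3_cosetGraph_adj hU] at hadj
      refine ⟨QuotientGroup.mk ((⟨a, ha⟩ : A)⁻¹ * ⟨b, hbA⟩),
        ⟨(⟨a, ha⟩ : A)⁻¹ * ⟨b, hbA⟩, rfl, hadj⟩, ?_⟩
      rw [← QuotientGroup.mk_mul, mul_inv_cancel_left, key3Psi_mk]
    · rintro ⟨q, hq, rfl⟩
      obtain ⟨c, rfl, hcU⟩ := hq
      rw [← QuotientGroup.mk_mul, key3Psi_mk]
      refine ⟨⟨(⟨a, ha⟩ * c : A), mul_mem ha c.2, rfl⟩, ?_⟩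
      rw [key3_cosetGraph_adj hU]
      simpa using hcU
  rw [hset]
  exact Set.ncard_image_of_injective _ (key3Psi_injective.comp (mul_right_injective _))

lemma key3_regular_of_symm (hHA : H ≤ A)
    (S : Finset (A ⧸ H.subgroupOf A)) (hS1 : (1 : A ⧸ H.subgroupOf A) ∉ S)
    (hsym : ∀ x ∈ S, x⁻¹ ∈ S) :
    IsRegularSetOfPair H A S.card 0 := by
  classical
  set U : Set G := {g : G | ∃ b : A, (b : G) = g ∧ QuotientGroup.mk b ∈ S} with hUdef
  have hmemU : ∀ b : A, ((b : G) ∈ U ↔ QuotientGroup.mk b ∈ S) := by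
    intro b
    constructor
    · rintro ⟨c, hc, hcS⟩
      rwa [Subtype.ext hc] at hcS
    · intro h; exact ⟨b, rfl, h⟩
  have hUsub : ∀ g ∈ U, g ∈ A := by rintro g ⟨b, rfl, _⟩; exact b.2
  have hkeyinv : ∀ g ∈ U, g⁻¹ ∈ U := by
    rintro g ⟨b, rfl, hbS⟩
    refine ⟨b⁻¹, rfl, ?_⟩
    rw [QuotientGroup.mk_inv]
    exact hsym _ hbS
  have hUinv : U⁻¹ = U := by
    ext g
    rw [Set.mem_inv]
    constructor
    · intro hg
      have := hkeyinv _ hg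
      rwa [inv_inv] at this
    · exact hkeyinv g
  have hdisj : (H : Set G) ∩ U = ∅ := by
    ext g
    simp only [Set.mem_inter_iff, Set.mem_empty_iff_false, iff_false, not_and]
    rintro hgH ⟨b, rfl, hbS⟩
    have hb : b ∈ H.subgroupOf A := Subgroup.mem_subgroupOf.2 hgH
    rw [(QuotientGroup.eq_one_iff b).2 hb] at hbS
    exact hS1 hbS
  have hHUH : (H : Set G) * U * (H : Set G) = U := by
    apply Set.Subset.antisymm
    · rintro x ⟨y, hy, h₂, hh₂, rfl⟩
      obtain ⟨h₁, hh₁, u, hu, rfl⟩ := hy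
      obtain ⟨b, rfl, hbS⟩ := hu
      refine ⟨(⟨h₁, hHA hh₁⟩ : A) * b * ⟨h₂, hHA hh₂⟩, rfl, ?_⟩
      have e1 : QuotientGroup.mk (⟨h₁, hHA hh₁⟩ : A) = (1 : A ⧸ H.subgroupOf A) :=
        (QuotientGroup.eq_one_iff _).2 (Subgroup.mem_subgroupOf.2 hh₁)
      have e2 : QuotientGroup.mk (⟨h₂, hHA hh₂⟩ : A) = (1 : A ⧸ H.subgroupOf A) :=
        (QuotientGroup.eq_one_iff _).2 (Subgroup.mem_subgroupOf.2 hh₂)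
      rw [QuotientGroup.mk_mul, QuotientGroup.mk_mul, e1, e2, one_mul, mul_one]
      exact hbS
    · intro u hu
      have h1H : (1 : G) ∈ (H : Set G) := H.one_mem
      have := Set.mul_mem_mul (Set.mul_mem_mul h1H hu) h1H
      simpa using this
  have hconn : IsCosetGraphConnectionSet H U := ⟨hUinv, hdisj, hHUH⟩
  refine ⟨U, hconn, ?_, ?_⟩
  · intro v hv
    obtain ⟨a, haA, rfl⟩ := hv
    rw [key3_count_nbrs hconn a haA]
    have hSb : {q : A ⧸ H.subgroupOf A | ∃ b : A, QuotientGroup.mk b = q ∧ (b : G) ∈ U}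
        = (S : Set (A ⧸ H.subgroupOf A)) := by
      ext q
      constructor
      · rintro ⟨b, rfl, hbU⟩
        exact (hmemU b).1 hbU
      · intro hq
        obtain ⟨b, rfl⟩ := QuotientGroup.mk_surjective q
        exact ⟨b, rfl, (hmemU b).2 hq⟩
    rw [hSb, Set.ncard_coe_finset]
  · intro v hv
    have hempty : {w : G ⧸ H | w ∈ {C : G ⧸ H | ∃ a ∈ A, QuotientGroup.mk a = C} ∧
        (cosetGraph H U).Adj v w} = ∅ := by
      ext D
      simp only [Set.mem_setOf_eq, Set.mem_empty_iff_false, iff_false, not_and]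
      rintro ⟨b, hbA, rfl⟩ hadj
      obtain ⟨g, rfl⟩ := QuotientGroup.mk_surjective v
      rw [key3_cosetGraph_adj hconn g b] at hadj
      have hgb : g⁻¹ * b ∈ A := hUsub _ hadj
      have hg : g ∈ A := by
        have := mul_mem hbA (inv_mem hgb)
        simpa [mul_inv_rev, mul_assoc] using this
      exact hv ⟨g, hg, rfl⟩
    rw [hempty, Set.ncard_empty]

end Grp


/-- **Lemma (key3).** Let `H ⊴ A ≤ G` and `0 ≤ r ≤ |A:H| − 1`. Then `A` is an
`(r,0)`-regular set of `(G,H)` iff `gcd(2, |A:H| − 1)` divides `r`. -/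
theorem lemma_key3 {G : Type*} [Group G] [Fintype G] (H A : Subgroup G) (hHA : H ≤ A)
    (hHnA : (H.subgroupOf A).Normal) (r : ℕ) (hr : r ≤ H.relIndex A - 1) :
    IsRegularSetOfPair H A r 0 ↔ Nat.gcd 2 (H.relIndex A - 1) ∣ r := by
  classical
  haveI := hHnA
  haveI : Fintype (A ⧸ H.subgroupOf A) := Fintype.ofFinite _
  have hn : H.relIndex A = Fintype.card (A ⧸ H.subgroupOf A) := by
    rw [Subgroup.relIndex, Subgroup.index, Nat.card_eq_fintype_card]
  constructor
  · rintro ⟨U, hU, hreg⟩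
    have h1 := hreg.1 (QuotientGroup.mk (1 : G)) ⟨1, A.one_mem, rfl⟩
    rw [key3_count_nbrs hU 1 A.one_mem] at h1
    rcases Nat.even_or_odd (H.relIndex A) with hev | hodd
    · have hg1 : Nat.gcd 2 (H.relIndex A - 1) = 1 := by
        have hpos : 0 < H.relIndex A := by
          rw [hn]; exact Fintype.card_pos
        obtain ⟨k, hk⟩ := hev
        have : ¬ 2 ∣ (H.relIndex A - 1) := by omega
        rcases (Nat.dvd_prime Nat.prime_two).1 (Nat.gcd_dvd_left 2 (H.relIndex A - 1)) with h | h
        · exact h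
        · exact absurd (h ▸ Nat.gcd_dvd_right 2 (H.relIndex A - 1)) this
      rw [hg1]
      exact one_dvd r
    · refine (Nat.gcd_dvd_left 2 (H.relIndex A - 1)).trans ?_
      rw [← h1]
      set Sb := {q : A ⧸ H.subgroupOf A | ∃ b : A, QuotientGroup.mk b = q ∧ (b : G) ∈ U} with hSbdef
      have hfin : Sb.Finite := Set.toFinite _
      rw [Set.ncard_eq_toFinset_card Sb hfin]
      refine (key3_even_card_of_symm hfin.toFinset ?_ ?_).two_dvd
      · intro q hq
        rw [Set.Finite.mem_toFinset] at hq ⊢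
        obtain ⟨b, rfl, hbU⟩ := hq
        refine ⟨b⁻¹, by rw [QuotientGroup.mk_inv], ?_⟩
        have : ((b : G))⁻¹ ∈ U := by
          rw [← hU.1, Set.mem_inv, inv_inv]; exact hbU
        simpa using this
      · intro q hq hqinv
        rw [Set.Finite.mem_toFinset] at hq
        obtain ⟨b, rfl, hbU⟩ := hq
        have hsq : (QuotientGroup.mk b : A ⧸ H.subgroupOf A) ^ 2 = 1 := by
          rw [pow_two]
          nth_rewrite 1 [← hqinv]
          exact inv_mul_cancel _
        have hord : orderOf (QuotientGroup.mk b : A ⧸ H.subgroupOf A) ∣ 2 :=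
          orderOf_dvd_of_pow_eq_one hsq
        rcases (Nat.dvd_prime Nat.prime_two).1 hord with h | h
        · have hb1 : (QuotientGroup.mk b : A ⧸ H.subgroupOf A) = 1 := orderOf_eq_one_iff.1 h
          have hbH : (b : G) ∈ H := Subgroup.mem_subgroupOf.1 ((QuotientGroup.eq_one_iff b).1 hb1)
          have : (b : G) ∈ (H : Set G) ∩ U := ⟨hbH, hbU⟩
          rw [hU.2.1] at this
          exact this
        · have : 2 ∣ H.relIndex A := by
            rw [hn]
            exact h ▸ orderOf_dvd_card
          obtain ⟨k, hk⟩ := hodd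
          omega
  · intro hd
    obtain ⟨S, hS1, hSsym, hScard⟩ := key3_exists_symm_finset (Q := A ⧸ H.subgroupOf A) r
      (by rw [← hn]; exact hr) (by rw [← hn]; exact hd)
    have := key3_regular_of_symm hHA S hS1 hSsym
    rwa [hScard] at this
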